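/- Let a, b ∈ ℝ with a < b, and let f : ℝ → ℝ be integrable with f ≥ 0 almost everywhere, f = 0 almost everywhere on [a,b], and f not equal to 0 almost everywhere on ℝ. Define F(x) = -(1/2) ∫_ℝ sgn(x-y) e^{-|x-y|} f(y) dy, where sgn denotes the sign function (sgn 0 = 0). Then F(b) > F(a). -/

import Mathlib

open MeasureTheory Real

lemma measurable_realSign : Measurable Real.sign := by
  have h : Real.sign = fun r : ℝ => if r < 0 then (-1 : ℝ) else if 0 < r then 1 else 0 := by
    funext r; rfl
  rw [h]
  exact Measurable.ite (measurableSet_lt measurable_id measurable_const) measurable_const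
    (Measurable.ite (measurableSet_lt measurable_const measurable_id) measurable_const
      measurable_const)

lemma integ_ker (f : ℝ → ℝ) (hf : Integrable f) (x : ℝ) :
    Integrable (fun y => Real.sign (x - y) * Real.exp (-|x - y|) * f y) := by
  apply Integrable.bdd_mul (c := 1) hf
  · exact ((measurable_realSign.comp (measurable_const.sub measurable_id)).mul
      ((measurable_const.sub measurable_id).abs.neg.exp)).aestronglyMeasurable
  · refine Filter.Eventually.of_forall (fun y => ?_)
    rw [norm_mul]
    have h1 : ‖Real.sign (x - y)‖ ≤ 1 := by
      rcases Real.sign_apply_eq (x - y) with h | h | h <;> rw [h] <;> norm_num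
    have h2 : ‖Real.exp (-|x - y|)‖ ≤ 1 := by
      rw [Real.norm_eq_abs, abs_of_pos (Real.exp_pos _)]
      exact Real.exp_le_one_iff.mpr (neg_nonpos.mpr (abs_nonneg _))
    calc ‖Real.sign (x - y)‖ * ‖Real.exp (-|x - y|)‖ ≤ 1 * 1 :=
          mul_le_mul h1 h2 (norm_nonneg _) zero_le_one
      _ = 1 := by norm_num

lemma coeff_neg (a b y : ℝ) (hab : a < b) (hy : y < a ∨ b < y) :
    Real.sign (b - y) * Real.exp (-|b - y|) - Real.sign (a - y) * Real.exp (-|a - y|) < 0 := by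
  rcases hy with h | h
  · have h1 : 0 < a - y := by linarith
    have h2 : 0 < b - y := by linarith
    rw [Real.sign_of_pos h1, Real.sign_of_pos h2, abs_of_pos h1, abs_of_pos h2]
    have := Real.exp_lt_exp.mpr (show -(b - y) < -(a - y) by linarith)
    linarith
  · have h1 : a - y < 0 := by linarith
    have h2 : b - y < 0 := by linarith
    rw [Real.sign_of_neg h1, Real.sign_of_neg h2, abs_of_neg h1, abs_of_neg h2]
    simp only [neg_neg]
    have := Real.exp_lt_exp.mpr (show a - y < b - y by linarith)
    linarith

theorem F_endpoint_strict_monotone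
    (a b : ℝ) (hab : a < b)
    (f : ℝ → ℝ) (hf : Integrable f)
    (hf_nonneg : ∀ᵐ y : ℝ, 0 ≤ f y)
    (hf_zero : ∀ᵐ y : ℝ, y ∈ Set.Icc a b → f y = 0)
    (hf_ne : ¬ (f =ᵐ[volume] 0))
    (F : ℝ → ℝ)
    (hF : ∀ x, F x = -(1/2) * ∫ y : ℝ, Real.sign (x - y) * Real.exp (-|x - y|) * f y) :
    F a < F b := by
  set g : ℝ → ℝ := fun y =>
    -(1/2) * ((Real.sign (b - y) * Real.exp (-|b - y|)
      - Real.sign (a - y) * Real.exp (-|a - y|)) * f y) with hg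
  have hib := integ_ker f hf b
  have hia := integ_ker f hf a
  have hgint : Integrable g := by
    have : g = fun y => -(1/2) * ((Real.sign (b - y) * Real.exp (-|b - y|) * f y)
        - (Real.sign (a - y) * Real.exp (-|a - y|) * f y)) := by
      funext y; simp [hg]; ring
    rw [this]
    exact ((hib.sub hia).const_mul _)
  have key : F b - F a = ∫ y, g y := by
    rw [hF a, hF b]
    have : (∫ y, g y) = -(1/2) * ∫ y, ((Real.sign (b - y) * Real.exp (-|b - y|) * f y)
        - (Real.sign (a - y) * Real.exp (-|a - y|) * f y)) := by
      rw [← integral_const_mul]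
      congr 1; funext y; simp [hg]; ring
    rw [this, integral_sub hib hia]
    ring
  have hg_nonneg : 0 ≤ᵐ[volume] g := by
    filter_upwards [hf_nonneg, hf_zero] with y hy0 hyz
    by_cases hy : y ∈ Set.Icc a b
    · simp [hg, hyz hy]
    · have hy' : y < a ∨ b < y := by
        simp only [Set.mem_Icc, not_and_or, not_le] at hy
        tauto
      have hc := coeff_neg a b y hab hy'
      have : (0:ℝ) ≤ -(1/2) * (Real.sign (b - y) * Real.exp (-|b - y|)
          - Real.sign (a - y) * Real.exp (-|a - y|)) := by nlinarith
      simp only [hg, Pi.zero_apply]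
      calc (0:ℝ) ≤ (-(1/2) * (Real.sign (b - y) * Real.exp (-|b - y|)
          - Real.sign (a - y) * Real.exp (-|a - y|))) * f y := mul_nonneg this hy0
        _ = -(1/2) * ((Real.sign (b - y) * Real.exp (-|b - y|)
          - Real.sign (a - y) * Real.exp (-|a - y|)) * f y) := by ring
  have hge : 0 ≤ ∫ y, g y := integral_nonneg_of_ae hg_nonneg
  rcases hge.lt_or_eq with hpos | heq
  · linarith
  · exfalso
    apply hf_ne
    have hg0 : g =ᵐ[volume] 0 :=
      (integral_eq_zero_iff_of_nonneg_ae hg_nonneg hgint).mp heq.symm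
    filter_upwards [hg0, hf_zero] with y hgy hyz
    by_cases hy : y ∈ Set.Icc a b
    · exact hyz hy
    · have hy' : y < a ∨ b < y := by
        simp only [Set.mem_Icc, not_and_or, not_le] at hy
        tauto
      have hc := coeff_neg a b y hab hy'
      have hne : -(1/2) * (Real.sign (b - y) * Real.exp (-|b - y|)
          - Real.sign (a - y) * Real.exp (-|a - y|)) ≠ 0 := by
        have : (0:ℝ) < -(1/2) * (Real.sign (b - y) * Real.exp (-|b - y|)
          - Real.sign (a - y) * Real.exp (-|a - y|)) := by nlinarith
        exact ne_of_gt this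
      simp only [hg, Pi.zero_apply] at hgy
      have : (-(1/2) * (Real.sign (b - y) * Real.exp (-|b - y|)
          - Real.sign (a - y) * Real.exp (-|a - y|))) * f y = 0 := by linarith [hgy]
      simpa using (mul_eq_zero.mp this).resolve_left hne
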